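/- Let b̄_n denote the number of derangements σ of [n] with σ(n) = 1. Then b̄_n = (n-2)·b̄_{n-1} + (n-3)·b̄_{n-2} for n ≥ 3. -/

import Mathlib

open Finset

/-- `bbar n` is the number of derangements σ of `[n]` (modelled 0-based on
`Fin n`) with σ(n) = 1, i.e. σ maps the last element to the first. -/
def bbar (n : ℕ) : ℕ :=
  (Finset.univ.filter (fun σ : Equiv.Perm (Fin n) =>
      (∀ i, σ i ≠ i) ∧ ∀ i : Fin n, i.val = n - 1 → (σ i).val = 0)).card

open Equiv in
lemma bbar_key (m : ℕ) : (m + 1) * bbar (m + 2) = numDerangements (m + 2) := by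
  classical
  set n := m + 2 with hndef
  have hn2 : 2 ≤ n := by omega
  let last : Fin n := Fin.last (m+1)
  let D : Finset (Perm (Fin n)) := univ.filter (fun σ => ∀ i, σ i ≠ i)
  have hcardD : D.card = numDerangements n := by
    rw [← card_derangements_fin_eq_numDerangements]
    rw [← Set.toFinset_card]
    congr 1
    ext σ
    rw [Set.mem_toFinset]
    simp [D, derangements]
  have hpart : D.card = ∑ k ∈ univ.erase last, (D.filter (fun σ => σ last = k)).card := by
    apply Finset.card_eq_sum_card_fiberwise
    intro σ hσ
    simp only [D, mem_coe, mem_filter, mem_univ, true_and] at hσ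
    simp [Finset.mem_erase, hσ last]
  have hfib : ∀ k ∈ univ.erase last, (D.filter (fun σ => σ last = k)).card
      = (D.filter (fun σ => σ last = 0)).card := by
    intro k hk
    have hkl : k ≠ last := by simpa using hk
    have h0l : (0 : Fin n) ≠ last := by
      apply Fin.ne_of_val_ne
      simp [last]
    apply Finset.card_bij' (fun σ _ => (swap (0:Fin n) k) * σ * (swap (0:Fin n) k))
      (fun σ _ => (swap (0:Fin n) k) * σ * (swap (0:Fin n) k))
    · intro σ hσ
      simp only [D, mem_filter, mem_univ, true_and] at hσ ⊢
      obtain ⟨⟨hd, hval⟩⟩ := And.intro hσ trivial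
      constructor
      · intro i
        simp only [Perm.coe_mul, Function.comp_apply]
        intro h
        have := hd (swap (0:Fin n) k i)
        apply this
        have := congrArg (swap (0:Fin n) k) h
        simpa using this
      · simp only [Perm.coe_mul, Function.comp_apply]
        rw [swap_apply_of_ne_of_ne h0l.symm hkl.symm, hval, swap_apply_right]
    · intro σ hσ
      simp only [D, mem_filter, mem_univ, true_and] at hσ ⊢
      obtain ⟨hd, hval⟩ := hσ
      constructor
      · intro i
        simp only [Perm.coe_mul, Function.comp_apply]
        intro h
        apply hd (swap (0:Fin n) k i)
        have := congrArg (swap (0:Fin n) k) h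
        simpa using this
      · simp only [Perm.coe_mul, Function.comp_apply]
        rw [swap_apply_of_ne_of_ne h0l.symm hkl.symm, hval, swap_apply_left]
    · intro σ _; ext i; simp [mul_assoc]
    · intro σ _; ext i; simp [mul_assoc]
  have hbbar : (D.filter (fun σ => σ last = 0)).card = bbar n := by
    unfold bbar
    rw [Finset.filter_filter]
    congr 1
    ext σ
    simp only [mem_filter, mem_univ, true_and]
    constructor
    · rintro ⟨hd, h0⟩
      refine ⟨hd, fun i hi => ?_⟩
      have : i = last := by
        simp only [last, Fin.ext_iff, Fin.val_last]; omega
      subst this; rw [h0]; rfl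
    · rintro ⟨hd, h0⟩
      refine ⟨hd, ?_⟩
      have := h0 last (by simp [last, hndef])
      exact Fin.ext (by simpa using this)
  rw [← hcardD, hpart, Finset.sum_congr rfl hfib, Finset.sum_const,
    Finset.card_erase_of_mem (mem_univ _), hbbar]
  simp [hndef, mul_comm]

lemma bbar_key2 (m : ℕ) : m * bbar (m + 1) = numDerangements (m + 1) := by
  cases m with
  | zero => simp
  | succ k => exact bbar_key k

theorem stmt13 (n : ℕ) (hn : 3 ≤ n) :
    bbar n = (n - 2) * bbar (n - 1) + (n - 3) * bbar (n - 2) := by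
  obtain ⟨m, rfl⟩ : ∃ m, n = m + 3 := ⟨n - 3, by omega⟩
  have hs1 : m + 3 - 1 = m + 2 := rfl
  have hs2 : m + 3 - 2 = m + 1 := rfl
  have hs3 : m + 3 - 3 = m := rfl
  rw [hs1, hs2, hs3]
  apply Nat.eq_of_mul_eq_mul_left (show 0 < m + 2 by omega)
  calc (m + 2) * bbar (m + 3) = numDerangements (m + 3) := bbar_key (m + 1)
    _ = (m + 2) * (numDerangements (m + 1) + numDerangements (m + 2)) :=
        numDerangements_add_two (m + 1)
    _ = (m + 2) * (m * bbar (m + 1) + (m + 1) * bbar (m + 2)) := by rw [bbar_key2, bbar_key]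
    _ = (m + 2) * ((m + 1) * bbar (m + 2) + m * bbar (m + 1)) := by ring
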